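/- arXiv:1004.3146 — 4 statements merged into one kernel-verified Lean document; each statement's English description precedes it below -/
import Mathlib

section
/- For any real numbers a, b, c with a + b + c = 0, the matrix R(a,b,c) with rows (1, cos c, cos b), (cos c, 1, cos a), (cos b, cos a, 1) is positive semidefinite. -/
theorem stmt_2 (a b c : ℝ) (h : a + b + c = 0) :
    (!![1, Real.cos c, Real.cos b; Real.cos c, 1, Real.cos a;
        Real.cos b, Real.cos a, 1] : Matrix (Fin 3) (Fin 3) ℝ).PosSemidef := by
  have ha : a = -(b + c) := by linarith
  have hA := Matrix.posSemidef_conjTranspose_mul_self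
    (!![1, Real.cos c, Real.cos b; 0, Real.sin c, -Real.sin b] : Matrix (Fin 2) (Fin 3) ℝ)
  convert hA using 1
  ext i j
  fin_cases i <;> fin_cases j <;>
    simp [Matrix.mul_apply, Fin.sum_univ_succ, ha, Real.cos_add,
      Real.sin_sq_add_cos_sq, Real.cos_sq_add_sin_sq] <;> ring_nf <;>
    nlinarith [Real.sin_sq_add_cos_sq b, Real.sin_sq_add_cos_sq c]
end

section
/- The matrix R(a,b,c) with rows (1, cos c, cos b), (cos c, 1, cos a), (cos b, cos a, 1), where a + b + c = 0, has rank 2 if and only if (sin a, sin b, sin c) ≠ (0,0,0). -/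
lemma aux_sub_rank_le (A : Matrix (Fin 3) (Fin 3) ℝ) (f g : Fin 2 → Fin 3) :
    (A.submatrix f g).rank ≤ A.rank := by
  have hfac : A.submatrix f g =
      ((1 : Matrix (Fin 3) (Fin 3) ℝ).submatrix f id) *
        (A * ((1 : Matrix (Fin 3) (Fin 3) ℝ).submatrix id g)) := by
    ext i j
    simp [Matrix.mul_apply, Matrix.one_apply, Finset.sum_ite_eq, Finset.sum_ite_eq']
  rw [hfac]
  exact (Matrix.rank_mul_le_right _ _).trans (Matrix.rank_mul_le_left _ _)

lemma aux_rank_le_two (A : Matrix (Fin 3) (Fin 3) ℝ) (h : A.det = 0) : A.rank ≤ 2 := by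
  by_contra hlt
  push_neg at hlt
  have h3 : A.rank = 3 := le_antisymm (A.rank_le_card_width.trans (by simp)) hlt
  have htop : LinearMap.range A.mulVecLin = ⊤ := by
    apply Submodule.eq_top_of_finrank_eq
    rw [show Module.finrank ℝ ↥(LinearMap.range A.mulVecLin) = A.rank from rfl, h3]
    simp
  have hsurj : Function.Surjective A.mulVec := by
    intro v
    obtain ⟨w, hw⟩ := LinearMap.range_eq_top.mp htop v
    exact ⟨w, hw⟩
  have := Matrix.mulVec_surjective_iff_isUnit.mp hsurj
  rw [Matrix.isUnit_iff_isUnit_det] at this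
  exact this.ne_zero h

theorem stmt_3 (a b c : ℝ) (h : a + b + c = 0) :
    (!![1, Real.cos c, Real.cos b; Real.cos c, 1, Real.cos a;
        Real.cos b, Real.cos a, 1] : Matrix (Fin 3) (Fin 3) ℝ).rank = 2 ↔
      ¬(Real.sin a = 0 ∧ Real.sin b = 0 ∧ Real.sin c = 0) := by
  set M : Matrix (Fin 3) (Fin 3) ℝ :=
    !![1, Real.cos c, Real.cos b; Real.cos c, 1, Real.cos a;
        Real.cos b, Real.cos a, 1] with hM
  have hcc : Real.cos c = Real.cos a * Real.cos b - Real.sin a * Real.sin b := by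
    have hce : c = -(a + b) := by linarith
    rw [hce, Real.cos_neg, Real.cos_add]
  constructor
  · rintro h2 ⟨ha, hb, hc⟩
    have hc' : Real.cos c = Real.cos a * Real.cos b := by rw [hcc, ha]; ring
    have ha2 : Real.cos a ^ 2 = 1 := by nlinarith [Real.sin_sq_add_cos_sq a]
    have hb2 : Real.cos b ^ 2 = 1 := by nlinarith [Real.sin_sq_add_cos_sq b]
    have e1 : Real.cos c * Real.cos c = 1 := by
      rw [hc']; linear_combination Real.cos b ^ 2 * ha2 + hb2
    have e2 : Real.cos c * Real.cos b = Real.cos a := by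
      rw [hc']; linear_combination Real.cos a * hb2
    have e3 : Real.cos b * Real.cos c = Real.cos a := by
      rw [hc']; linear_combination Real.cos a * hb2
    have e4 : Real.cos b * Real.cos b = 1 := by linear_combination hb2
    have hfac : M = (!![1; Real.cos c; Real.cos b] : Matrix (Fin 3) (Fin 1) ℝ) *
        (!![1, Real.cos c, Real.cos b] : Matrix (Fin 1) (Fin 3) ℝ) := by
      ext i j
      fin_cases i <;> fin_cases j <;>
        simp [hM, Matrix.mul_apply] <;> linarith [e1, e2, e3, e4]
    have hle : M.rank ≤ 1 := by
      rw [hfac]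
      exact (Matrix.rank_mul_le_right _ _).trans
        ((Matrix.rank_le_card_height _).trans (by simp))
    omega
  · intro hn
    have key : ∀ f : Fin 2 → Fin 3, IsUnit (M.submatrix f f).det → 2 ≤ M.rank := by
      intro f hu
      have hr := Matrix.rank_of_isUnit (M.submatrix f f)
        ((Matrix.isUnit_iff_isUnit_det _).mpr hu)
      calc (2 : ℕ) = (M.submatrix f f).rank := by rw [hr]; simp
        _ ≤ M.rank := aux_sub_rank_le M f f
    refine le_antisymm (aux_rank_le_two M ?_) ?_
    · rw [hM, Matrix.det_fin_three]
      simp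
      norm_num [hcc]
      linear_combination (Real.cos b ^ 2 - 1) * Real.sin_sq_add_cos_sq a -
        Real.sin a ^ 2 * Real.sin_sq_add_cos_sq b
    · by_cases ha : Real.sin a = 0
      · by_cases hb : Real.sin b = 0
        · have hcne : Real.sin c ≠ 0 := fun hc => hn ⟨ha, hb, hc⟩
          apply key ![0, 1]
          have hd : (M.submatrix ![0, 1] ![0, 1]).det = Real.sin c ^ 2 := by
            rw [Matrix.det_fin_two]
            simp [hM]
            nlinarith [Real.sin_sq_add_cos_sq c]
          rw [hd]
          exact (pow_ne_zero 2 hcne).isUnit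
        · apply key ![0, 2]
          have hd : (M.submatrix ![0, 2] ![0, 2]).det = Real.sin b ^ 2 := by
            rw [Matrix.det_fin_two]
            simp [hM]
            nlinarith [Real.sin_sq_add_cos_sq b]
          rw [hd]
          exact (pow_ne_zero 2 hb).isUnit
      · apply key ![1, 2]
        have hd : (M.submatrix ![1, 2] ![1, 2]).det = Real.sin a ^ 2 := by
          rw [Matrix.det_fin_two]
          simp [hM]
          nlinarith [Real.sin_sq_add_cos_sq a]
        rw [hd]
        exact (pow_ne_zero 2 ha).isUnit
end

section
/- Suppose x, y, z satisfy x² + y² - 2xy·cos c = sin²c and x·sin a + y·sin b + z·sin c = 0, where a + b + c = 0 and sin c ≠ 0. Then |z| ≤ 1. -/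
open Real

theorem stmt_10 (a b c x y z : ℝ) (habc : a + b + c = 0) (hc : sin c ≠ 0)
    (h1 : x ^ 2 + y ^ 2 - 2 * x * y * cos c = sin c ^ 2)
    (h2 : x * sin a + y * sin b + z * sin c = 0) :
    |z| ≤ 1 := by
  have hb : b = -(a + c) := by linarith
  have hsb : sin b = -(sin a * cos c + cos a * sin c) := by
    rw [hb, sin_neg, sin_add]
  have hpa := sin_sq_add_cos_sq a
  have hpc := sin_sq_add_cos_sq c
  have hsc : 0 < sin c ^ 2 := by positivity
  have key : (x * sin a + y * sin b) ^ 2 ≤ sin c ^ 2 := by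
    rw [hsb]
    nlinarith [sq_nonneg (cos a * (x - y * cos c) + sin a * (y * sin c)),
      sq_nonneg (x - y * cos c), sq_nonneg (y * sin c), sq_nonneg (sin c), sq_nonneg (cos c)]
  have hzeq : z * sin c = -(x * sin a + y * sin b) := by linarith
  have hzs : (z * sin c) ^ 2 ≤ sin c ^ 2 := by rw [hzeq, neg_sq]; exact key
  have hz2 : z ^ 2 ≤ 1 := by nlinarith [hzs, hsc]
  exact abs_le.mpr ⟨by nlinarith [sq_nonneg (z + 1)], by nlinarith [sq_nonneg (z - 1)]⟩
end

section
/- There is no 3-dimensional centered Gaussian vector (X,Y,Z) with unit variances such that the correlation matrix of (Φ(X), Φ(Y), Φ(Z)) has all off-diagonal entries equal to -1/2. Specifically: if the Gaussian correlations are p, q, r, then the copula correlations are g(p), g(q), g(r) with g(r) = 3 - (6/π)arccos(r/2) = (6/π)arcsin(r/2), and the equations g(p) = g(q) = g(r) = -1/2 force p = q = r = 2·sin(-π/12) < -1/2, making the Gaussian correlation matrix fail positive semidefiniteness since det = (1-p)²(1+2p) < 0. -/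
open Real

lemma sin_pi_div_twelve_gt : (1:ℝ)/4 < Real.sin (π/12) := by
  have hπ1 : (3.141592:ℝ) < π := Real.pi_gt_d6
  have hπ2 : π < 3.141593 := Real.pi_lt_d6
  have hx0 : (0:ℝ) < π/12 := by positivity
  have hx1 : π/12 ≤ 1 := by nlinarith
  have h := Real.sin_gt_sub_cube hx0
  have hmono : (1:ℝ)/4 < π/12 - (π/12)^3/4 := by nlinarith [sq_nonneg (π/12)]
  linarith [pow_pos hx0 3]

lemma key {p : ℝ} (h : 3 - (6 / π) * arccos (p / 2) = -(1 / 2)) : p < -(1/2) := by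
  have hπ : (0:ℝ) < π := Real.pi_pos
  have ha : arccos (p/2) = 7*π/12 := by
    field_simp at h
    nlinarith [h]
  have hne0 : arccos (p/2) ≠ 0 := by rw [ha]; positivity
  have hnepi : arccos (p/2) ≠ π := by rw [ha]; intro h'; nlinarith
  have h1 : ¬ (1 ≤ p/2) := fun h1 => hne0 (Real.arccos_eq_zero.2 h1)
  have h2 : ¬ (p/2 ≤ -1) := fun h2 => hnepi (Real.arccos_eq_pi.2 h2)
  push_neg at h1 h2
  have hc : Real.cos (arccos (p/2)) = p/2 := Real.cos_arccos (le_of_lt h2) (le_of_lt h1)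
  rw [ha] at hc
  have h7 : (7:ℝ)*π/12 = π/12 + π/2 := by ring
  rw [h7, Real.cos_add_pi_div_two] at hc
  have := sin_pi_div_twelve_gt
  linarith

theorem stmt_19 :
    ¬ ∃ p q r : ℝ,
      (!![1, r, q; r, 1, p; q, p, 1] : Matrix (Fin 3) (Fin 3) ℝ).PosSemidef ∧
        3 - (6 / π) * arccos (p / 2) = -(1 / 2) ∧
        3 - (6 / π) * arccos (q / 2) = -(1 / 2) ∧
        3 - (6 / π) * arccos (r / 2) = -(1 / 2) := by
  rintro ⟨p, q, r, hpsd, hp, hq, hr⟩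
  have hp' := key hp
  have hq' := key hq
  have hr' := key hr
  have h := (Matrix.posSemidef_iff_dotProduct_mulVec.1 hpsd).2 ![1, 1, 1]
  simp [dotProduct, Matrix.mulVec, Fin.sum_univ_three, Matrix.cons_val_zero,
    Matrix.cons_val_one] at h
  linarith
end
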